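/- Let H = P ∂/∂x + Q ∂/∂y be a quadratic vector field on C^2 (P, Q polynomials of degree at most 2) with exactly four nondegenerate singular points p_1, ..., p_4. Then sum_{i=1}^4 tr(DH(p_i))/det(DH(p_i)) = 0 and sum_{i=1}^4 1/det(DH(p_i)) = 0. -/

import Mathlib

open MvPolynomial

/-- The Jacobian determinant of the vector field `H = P ∂/∂x + Q ∂/∂y` at a point. -/
noncomputable def jacDet (P Q : MvPolynomial (Fin 2) ℂ) (v : Fin 2 → ℂ) : ℂ :=
  eval v (pderiv 0 P) * eval v (pderiv 1 Q) - eval v (pderiv 1 P) * eval v (pderiv 0 Q)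

/-- The trace of the linearization of `H = P ∂/∂x + Q ∂/∂y` at a point. -/
noncomputable def jacTr (P Q : MvPolynomial (Fin 2) ℂ) (v : Fin 2 → ℂ) : ℂ :=
  eval v (pderiv 0 P) + eval v (pderiv 1 Q)

/-- quadratic function of two variables given by six coefficients -/
def Qf (r0 r1 r2 r3 r4 r5 x y : ℂ) : ℂ :=
  r0 + r1 * x + r2 * y + r3 * x^2 + r4 * (x*y) + r5 * y^2

def QfX (r0 r1 r2 r3 r4 r5 x y : ℂ) : ℂ := r1 + 2 * r3 * x + r4 * y
def QfY (r0 r1 r2 r3 r4 r5 x y : ℂ) : ℂ := r2 + r4 * x + 2 * r5 * y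

lemma fin2_finsupp (m : Fin 2 →₀ ℕ) : m = Finsupp.single 0 (m 0) + Finsupp.single 1 (m 1) := by
  ext k
  fin_cases k <;> simp [Finsupp.single_apply]

lemma single_add_single_eq (i j : ℕ) (m : Fin 2 →₀ ℕ) :
    (Finsupp.single 0 i + Finsupp.single 1 j : Fin 2 →₀ ℕ) = m ↔ m 0 = i ∧ m 1 = j := by
  constructor
  · rintro rfl
    constructor <;> simp [Finsupp.single_apply]
  · rintro ⟨h0, h1⟩
    conv_rhs => rw [fin2_finsupp m]
    rw [h0, h1]

lemma stageA (P : MvPolynomial (Fin 2) ℂ) (hP : P.totalDegree ≤ 2) :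
    ∃ r0 r1 r2 r3 r4 r5 : ℂ,
      (∀ v : Fin 2 → ℂ, eval v P = Qf r0 r1 r2 r3 r4 r5 (v 0) (v 1)) ∧
      (∀ v : Fin 2 → ℂ, eval v (pderiv 0 P) = QfX r0 r1 r2 r3 r4 r5 (v 0) (v 1)) ∧
      (∀ v : Fin 2 → ℂ, eval v (pderiv 1 P) = QfY r0 r1 r2 r3 r4 r5 (v 0) (v 1)) := by
  set M : ℕ → ℕ → (Fin 2 →₀ ℕ) := fun i j => Finsupp.single 0 i + Finsupp.single 1 j with hM
  set c : ℕ → ℕ → ℂ := fun i j => coeff (M i j) P with hc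
  have hrepr : P = monomial (M 0 0) (c 0 0) + monomial (M 1 0) (c 1 0)
      + monomial (M 0 1) (c 0 1) + monomial (M 2 0) (c 2 0)
      + monomial (M 1 1) (c 1 1) + monomial (M 0 2) (c 0 2) := by
    apply MvPolynomial.ext
    intro m
    simp only [coeff_add, coeff_monomial, hM, single_add_single_eq]
    by_cases hdeg : m 0 + m 1 ≤ 2
    · have hm : M (m 0) (m 1) = m := (single_add_single_eq _ _ m).mpr ⟨rfl, rfl⟩
      have hcm : c (m 0) (m 1) = coeff m P := congrArg (fun n => MvPolynomial.coeff n P) hm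
      rw [← hcm]
      have h0 : m 0 ≤ 2 := by omega
      have h1 : m 1 ≤ 2 := by omega
      interval_cases h : (m 0) <;> interval_cases h' : (m 1) <;> simp_all <;> omega
    · have : coeff m P = 0 := by
        apply coeff_eq_zero_of_totalDegree_lt
        have hsum : ∑ i ∈ m.support, m i = m 0 + m 1 := by
          rw [Finset.sum_subset (Finset.subset_univ _)]
          · exact Fin.sum_univ_two m
          · intro x _ hx
            exact Finsupp.notMem_support_iff.mp hx
        omega
      rw [this]
      split_ifs <;> first | (exfalso; omega) | norm_num
  have hCX : ∀ (i j : ℕ) (a : ℂ), monomial (M i j) a = C a * X 0 ^ i * X 1 ^ j := by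
    intro i j a
    rw [X_pow_eq_monomial, X_pow_eq_monomial, C_apply, monomial_mul, monomial_mul]
    simp [hM]
  rw [hCX, hCX, hCX, hCX, hCX, hCX] at hrepr
  refine ⟨c 0 0, c 1 0, c 0 1, c 2 0, c 1 1, c 0 2, ?_, ?_, ?_⟩ <;> intro v <;>
    rw [hrepr] <;>
    simp [Qf, QfX, QfY, pderiv_mul, pderiv_X_self, pderiv_X] <;> ring

/-- a one-variable quadratic with three distinct roots is zero -/
lemma quad1 {A B C s1 s2 s3 : ℂ} (h12 : s1 ≠ s2) (h13 : s1 ≠ s3) (h23 : s2 ≠ s3)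
    (e1 : A + B*s1 + C*s1^2 = 0) (e2 : A + B*s2 + C*s2^2 = 0) (e3 : A + B*s3 + C*s3^2 = 0) :
    A = 0 ∧ B = 0 ∧ C = 0 := by
  have d12 : (s1 - s2) * (B + C*(s1+s2)) = 0 := by linear_combination e1 - e2
  have d13 : (s1 - s3) * (B + C*(s1+s3)) = 0 := by linear_combination e1 - e3
  have d12' : B + C*(s1+s2) = 0 := (mul_eq_zero.mp d12).resolve_left (sub_ne_zero.mpr h12)
  have d13' : B + C*(s1+s3) = 0 := (mul_eq_zero.mp d13).resolve_left (sub_ne_zero.mpr h13)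
  have hC2 : (s2 - s3) * C = 0 := by linear_combination d12' - d13'
  have hC : C = 0 := (mul_eq_zero.mp hC2).resolve_left (sub_ne_zero.mpr h23)
  have hB : B = 0 := by linear_combination d12' - (s1+s2)*hC
  have hA : A = 0 := by linear_combination e1 - s1*hB - (s1^2)*hC
  exact ⟨hA, hB, hC⟩

/-- substitution of a parametrized line into a quadratic -/
lemma substLine (r0 r1 r2 r3 r4 r5 px py ux uy : ℂ) (s : ℂ) :
    Qf r0 r1 r2 r3 r4 r5 (px + s*ux) (py + s*uy) =
      Qf r0 r1 r2 r3 r4 r5 px py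
      + (QfX r0 r1 r2 r3 r4 r5 px py * ux + QfY r0 r1 r2 r3 r4 r5 px py * uy) * s
      + (r3*ux^2 + r4*(ux*uy) + r5*uy^2) * s^2 := by
  simp only [Qf, QfX, QfY]; ring

/-- substitution of an affine parametrization of the plane into a quadratic -/
lemma substPlane (r0 r1 r2 r3 r4 r5 px py ux uy wx wy : ℂ) (s t : ℂ) :
    Qf r0 r1 r2 r3 r4 r5 (px + s*ux + t*wx) (py + s*uy + t*wy) =
      Qf (Qf r0 r1 r2 r3 r4 r5 px py)
         (QfX r0 r1 r2 r3 r4 r5 px py * ux + QfY r0 r1 r2 r3 r4 r5 px py * uy)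
         (QfX r0 r1 r2 r3 r4 r5 px py * wx + QfY r0 r1 r2 r3 r4 r5 px py * wy)
         (r3*ux^2 + r4*(ux*uy) + r5*uy^2)
         (2*r3*(ux*wx) + r4*(ux*wy + uy*wx) + 2*r5*(uy*wy))
         (r3*wx^2 + r4*(wx*wy) + r5*wy^2) s t := by
  simp only [Qf, QfX, QfY]; ring

/-- a quadratic vanishing on two coordinate lines and at one more generic point vanishes -/
lemma quad2 {c0 c1 c2 c3 c4 c5 s4 t4 : ℂ} (hs : s4 ≠ 0) (ht : t4 ≠ 0)
    (hrow : ∀ s, Qf c0 c1 c2 c3 c4 c5 s 0 = 0)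
    (hcol : ∀ t, Qf c0 c1 c2 c3 c4 c5 0 t = 0)
    (hpt : Qf c0 c1 c2 c3 c4 c5 s4 t4 = 0) :
    ∀ s t, Qf c0 c1 c2 c3 c4 c5 s t = 0 := by
  have hr : ∀ s : ℂ, c0 + c1*s + c3*s^2 = 0 := by
    intro s; have := hrow s; simp only [Qf] at this; linear_combination this
  have hc : ∀ t : ℂ, c0 + c2*t + c5*t^2 = 0 := by
    intro t; have := hcol t; simp only [Qf] at this; linear_combination this
  obtain ⟨h0, h1, h3⟩ := quad1 (by norm_num : (0:ℂ) ≠ 1) (by norm_num : (0:ℂ) ≠ 2)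
    (by norm_num : (1:ℂ) ≠ 2) (by simpa using hr 0) (by simpa using hr 1) (by simpa using hr 2)
  obtain ⟨_, h2, h5⟩ := quad1 (by norm_num : (0:ℂ) ≠ 1) (by norm_num : (0:ℂ) ≠ 2)
    (by norm_num : (1:ℂ) ≠ 2) (by simpa using hc 0) (by simpa using hc 1) (by simpa using hc 2)
  have h4st : c4 * (s4 * t4) = 0 := by
    simp only [Qf] at hpt; linear_combination hpt - h0 - s4*h1 - t4*h2 - s4^2*h3 - t4^2*h5
  have h4 : c4 = 0 := by
    rcases mul_eq_zero.mp h4st with h | h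
    · exact h
    · exact absurd h (mul_ne_zero hs ht)
  intro s t
  simp only [Qf, h0, h1, h2, h3, h4, h5]; ring

/-- coefficient extraction: a quadratic function vanishing everywhere has zero coefficients -/
lemma coeffs_eq_zero {r0 r1 r2 r3 r4 r5 : ℂ} (h : ∀ x y, Qf r0 r1 r2 r3 r4 r5 x y = 0) :
    r0 = 0 ∧ r1 = 0 ∧ r2 = 0 ∧ r3 = 0 ∧ r4 = 0 ∧ r5 = 0 := by
  have hr : ∀ s : ℂ, r0 + r1*s + r3*s^2 = 0 := by
    intro s; have := h s 0; simp only [Qf] at this; linear_combination this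
  have hc : ∀ t : ℂ, r0 + r2*t + r5*t^2 = 0 := by
    intro t; have := h 0 t; simp only [Qf] at this; linear_combination this
  obtain ⟨h0, h1, h3⟩ := quad1 (by norm_num : (0:ℂ) ≠ 1) (by norm_num : (0:ℂ) ≠ 2)
    (by norm_num : (1:ℂ) ≠ 2) (by simpa using hr 0) (by simpa using hr 1) (by simpa using hr 2)
  obtain ⟨_, h2, h5⟩ := quad1 (by norm_num : (0:ℂ) ≠ 1) (by norm_num : (0:ℂ) ≠ 2)
    (by norm_num : (1:ℂ) ≠ 2) (by simpa using hc 0) (by simpa using hc 1) (by simpa using hc 2)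
  have h11 := h 1 1
  simp only [Qf] at h11
  refine ⟨h0, h1, h2, h3, ?_, h5⟩
  linear_combination h11 - h0 - h1 - h2 - h3 - h5

/-- the key partial-fractions computation -/
lemma key {T0 T1 T2 T3 Dd D0 D1 D2 D3 : ℂ} (hDd : Dd ≠ 0)
    (h0 : D0 ≠ 0) (h1 : D1 ≠ 0) (h2 : D2 ≠ 0) (h3 : D3 ≠ 0)
    (hid : T0*D0 - T1*D1 + T2*D2 - T3*D3 = 0) :
    T0/(Dd*(D1*D2*D3)) + T1/(-(Dd*(D0*D2*D3))) + T2/(Dd*(D0*D1*D3)) + T3/(-(Dd*(D0*D1*D2))) = 0 := by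
  have ha : Dd*(D1*D2*D3) ≠ 0 := mul_ne_zero hDd (mul_ne_zero (mul_ne_zero h1 h2) h3)
  have hb : -(Dd*(D0*D2*D3)) ≠ 0 :=
    neg_ne_zero.mpr (mul_ne_zero hDd (mul_ne_zero (mul_ne_zero h0 h2) h3))
  have hc : Dd*(D0*D1*D3) ≠ 0 := mul_ne_zero hDd (mul_ne_zero (mul_ne_zero h0 h1) h3)
  have hd : -(Dd*(D0*D1*D2)) ≠ 0 :=
    neg_ne_zero.mpr (mul_ne_zero hDd (mul_ne_zero (mul_ne_zero h0 h1) h2))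
  have hden : Dd*(D0*D1*D2*D3) ≠ 0 :=
    mul_ne_zero hDd (mul_ne_zero (mul_ne_zero (mul_ne_zero h0 h1) h2) h3)
  have expand : T0/(Dd*(D1*D2*D3)) + T1/(-(Dd*(D0*D2*D3))) + T2/(Dd*(D0*D1*D3))
      + T3/(-(Dd*(D0*D1*D2))) = (T0*D0 - T1*D1 + T2*D2 - T3*D3) / (Dd*(D0*D1*D2*D3)) := by
    rw [div_add_div _ _ ha hb, div_add_div _ _ (mul_ne_zero ha hb) hc,
      div_add_div _ _ (mul_ne_zero (mul_ne_zero ha hb) hc) hd,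
      div_eq_div_iff (mul_ne_zero (mul_ne_zero (mul_ne_zero ha hb) hc) hd) hden]
    ring
  rw [expand, hid, zero_div]

def w10 (x1 y1 x2 y2 x3 y3 x4 y4 : ℂ) : ℂ := y1*x2*y3*x4 - y1*x2*x3*y4 - x1*y2*y3*x4 + x1*y2*x3*y4
def w20 (x1 y1 x2 y2 x3 y3 x4 y4 : ℂ) : ℂ := y1*y2*x3*x4 - y1*x2*x3*y4 - x1*y2*y3*x4 + x1*x2*y3*y4
def w11 (x1 y1 x2 y2 x3 y3 x4 y4 : ℂ) : ℂ := y2*y3*x4 - y2*x3*y4 - y1*y3*x4 + y1*x3*y4 + y1*x2*y4 - y1*x2*y3 - x1*y2*y4 + x1*y2*y3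
def w21 (x1 y1 x2 y2 x3 y3 x4 y4 : ℂ) : ℂ := y2*y3*x4 - x2*y3*y4 + y1*x3*y4 - y1*y2*x4 - y1*y2*x3 + y1*x2*y4 - x1*y3*y4 + x1*y2*y3
def w12 (x1 y1 x2 y2 x3 y3 x4 y4 : ℂ) : ℂ := -x2*y3*x4 + x2*x3*y4 - y1*x2*x4 + y1*x2*x3 + x1*y3*x4 - x1*x3*y4 + x1*y2*x4 - x1*y2*x3
def w22 (x1 y1 x2 y2 x3 y3 x4 y4 : ℂ) : ℂ := -y2*x3*x4 + x2*x3*y4 - y1*x3*x4 + y1*x2*x3 + x1*y3*x4 + x1*y2*x4 - x1*x2*y4 - x1*x2*y3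
def w13 (x1 y1 x2 y2 x3 y3 x4 y4 : ℂ) : ℂ := y2*y4 - y2*y3 - y1*y4 + y1*y3
def w23 (x1 y1 x2 y2 x3 y3 x4 y4 : ℂ) : ℂ := y3*y4 - y2*y3 - y1*y4 + y1*y2
def w14 (x1 y1 x2 y2 x3 y3 x4 y4 : ℂ) : ℂ := -y2*x4 + y2*x3 - x2*y4 + x2*y3 + y1*x4 - y1*x3 + x1*y4 - x1*y3
def w24 (x1 y1 x2 y2 x3 y3 x4 y4 : ℂ) : ℂ := -y3*x4 - x3*y4 + y2*x3 + x2*y3 + y1*x4 - y1*x2 + x1*y4 - x1*y2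
def w15 (x1 y1 x2 y2 x3 y3 x4 y4 : ℂ) : ℂ := x2*x4 - x2*x3 - x1*x4 + x1*x3
def w25 (x1 y1 x2 y2 x3 y3 x4 y4 : ℂ) : ℂ := x3*x4 - x2*x3 - x1*x4 + x1*x2

lemma span (x1 y1 x2 y2 x3 y3 x4 y4 r0 r1 r2 r3 r4 r5 : ℂ)
    (hd123 : (x2 - x1)*(y3 - y1) - (y2 - y1)*(x3 - x1) ≠ 0)
    (hd124 : (x2 - x1)*(y4 - y1) - (y2 - y1)*(x4 - x1) ≠ 0)
    (hd143 : (x4 - x1)*(y3 - y1) - (y4 - y1)*(x3 - x1) ≠ 0)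
    (hm24 : (x1 - x2)*(y4 - y2) - (y1 - y2)*(x4 - x2) ≠ 0)
    (hm34 : (x1 - x3)*(y4 - y3) - (y1 - y3)*(x4 - x3) ≠ 0)
    (h1 : Qf r0 r1 r2 r3 r4 r5 x1 y1 = 0) (h2 : Qf r0 r1 r2 r3 r4 r5 x2 y2 = 0)
    (h3 : Qf r0 r1 r2 r3 r4 r5 x3 y3 = 0) (h4 : Qf r0 r1 r2 r3 r4 r5 x4 y4 = 0) :
    ∃ al be : ℂ,
      r0 = al * w10 x1 y1 x2 y2 x3 y3 x4 y4 + be * w20 x1 y1 x2 y2 x3 y3 x4 y4 ∧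
      r1 = al * w11 x1 y1 x2 y2 x3 y3 x4 y4 + be * w21 x1 y1 x2 y2 x3 y3 x4 y4 ∧
      r2 = al * w12 x1 y1 x2 y2 x3 y3 x4 y4 + be * w22 x1 y1 x2 y2 x3 y3 x4 y4 ∧
      r3 = al * w13 x1 y1 x2 y2 x3 y3 x4 y4 + be * w23 x1 y1 x2 y2 x3 y3 x4 y4 ∧
      r4 = al * w14 x1 y1 x2 y2 x3 y3 x4 y4 + be * w24 x1 y1 x2 y2 x3 y3 x4 y4 ∧
      r5 = al * w15 x1 y1 x2 y2 x3 y3 x4 y4 + be * w25 x1 y1 x2 y2 x3 y3 x4 y4 := by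
  -- choose parameter t2 for a point q2 on the line p1p2
  obtain ⟨t2, ht2⟩ := Infinite.exists_notMem_finset
    ({0, 1, -((x1 - x2)*(y4 - y2) - (y1 - y2)*(x4 - x2)) / ((x2 - x1)*(y4 - y2) - (y2 - y1)*(x4 - x2))} : Finset ℂ)
  simp only [Finset.mem_insert, Finset.mem_singleton, not_or] at ht2
  obtain ⟨ht20, ht21, ht2r⟩ := ht2
  have hL24q2 : (x1 - x2)*(y4 - y2) - (y1 - y2)*(x4 - x2)
      + t2*((x2 - x1)*(y4 - y2) - (y2 - y1)*(x4 - x2)) ≠ 0 := by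
    rcases eq_or_ne ((x2 - x1)*(y4 - y2) - (y2 - y1)*(x4 - x2)) 0 with hg | hg
    · intro h; apply hm24; linear_combination h - t2*hg
    · intro h; apply ht2r; rw [eq_div_iff hg]; linear_combination h
  -- choose parameter t1 for a point q1 on the line p1p3
  obtain ⟨t1, ht1⟩ := Infinite.exists_notMem_finset
    ({0, 1, -((x1 - x3)*(y4 - y3) - (y1 - y3)*(x4 - x3)) / ((x3 - x1)*(y4 - y3) - (y3 - y1)*(x4 - x3))} : Finset ℂ)
  simp only [Finset.mem_insert, Finset.mem_singleton, not_or] at ht1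
  obtain ⟨ht10, ht11, ht1r⟩ := ht1
  have hL34q1 : (x1 - x3)*(y4 - y3) - (y1 - y3)*(x4 - x3)
      + t1*((x3 - x1)*(y4 - y3) - (y3 - y1)*(x4 - x3)) ≠ 0 := by
    rcases eq_or_ne ((x3 - x1)*(y4 - y3) - (y3 - y1)*(x4 - x3)) 0 with hg | hg
    · intro h; apply hm34; linear_combination h - t1*hg
    · intro h; apply ht1r; rw [eq_div_iff hg]; linear_combination h
  have hL12q1 : t1 * ((x3 - x1)*(y2 - y1) - (y3 - y1)*(x2 - x1)) ≠ 0 :=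
    mul_ne_zero ht10 (fun h => hd123 (by linear_combination -h))
  have hL13q2 : t2 * ((x2 - x1)*(y3 - y1) - (y2 - y1)*(x3 - x1)) ≠ 0 :=
    mul_ne_zero ht20 (fun h => hd123 (by linear_combination h))
  have hden1 : (t1 * ((x3 - x1)*(y2 - y1) - (y3 - y1)*(x2 - x1)))
      * ((x1 - x3)*(y4 - y3) - (y1 - y3)*(x4 - x3)
        + t1*((x3 - x1)*(y4 - y3) - (y3 - y1)*(x4 - x3))) ≠ 0 := mul_ne_zero hL12q1 hL34q1
  have hden2 : (t2 * ((x2 - x1)*(y3 - y1) - (y2 - y1)*(x3 - x1)))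
      * ((x1 - x2)*(y4 - y2) - (y1 - y2)*(x4 - x2)
        + t2*((x2 - x1)*(y4 - y2) - (y2 - y1)*(x4 - x2))) ≠ 0 := mul_ne_zero hL13q2 hL24q2
  set al : ℂ := Qf r0 r1 r2 r3 r4 r5 (x1 + t1*(x3 - x1)) (y1 + t1*(y3 - y1)) /
      ((t1 * ((x3 - x1)*(y2 - y1) - (y3 - y1)*(x2 - x1)))
      * ((x1 - x3)*(y4 - y3) - (y1 - y3)*(x4 - x3)
        + t1*((x3 - x1)*(y4 - y3) - (y3 - y1)*(x4 - x3)))) with hal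
  set be : ℂ := Qf r0 r1 r2 r3 r4 r5 (x1 + t2*(x2 - x1)) (y1 + t2*(y2 - y1)) /
      ((t2 * ((x2 - x1)*(y3 - y1) - (y2 - y1)*(x3 - x1)))
      * ((x1 - x2)*(y4 - y2) - (y1 - y2)*(x4 - x2)
        + t2*((x2 - x1)*(y4 - y2) - (y2 - y1)*(x4 - x2)))) with hbe
  have halm := div_mul_cancel₀ (Qf r0 r1 r2 r3 r4 r5 (x1 + t1*(x3 - x1)) (y1 + t1*(y3 - y1))) hden1
  have hbem := div_mul_cancel₀ (Qf r0 r1 r2 r3 r4 r5 (x1 + t2*(x2 - x1)) (y1 + t2*(y2 - y1))) hden2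
  rw [← hal] at halm
  rw [← hbe] at hbem
  -- the residual quadratic R
  have hRfun : ∀ X Y : ℂ, Qf (r0 - al * w10 x1 y1 x2 y2 x3 y3 x4 y4 + -(be * w20 x1 y1 x2 y2 x3 y3 x4 y4)) (r1 - al * w11 x1 y1 x2 y2 x3 y3 x4 y4 + -(be * w21 x1 y1 x2 y2 x3 y3 x4 y4)) (r2 - al * w12 x1 y1 x2 y2 x3 y3 x4 y4 + -(be * w22 x1 y1 x2 y2 x3 y3 x4 y4)) (r3 - al * w13 x1 y1 x2 y2 x3 y3 x4 y4 + -(be * w23 x1 y1 x2 y2 x3 y3 x4 y4)) (r4 - al * w14 x1 y1 x2 y2 x3 y3 x4 y4 + -(be * w24 x1 y1 x2 y2 x3 y3 x4 y4)) (r5 - al * w15 x1 y1 x2 y2 x3 y3 x4 y4 + -(be * w25 x1 y1 x2 y2 x3 y3 x4 y4)) X Y =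
      Qf r0 r1 r2 r3 r4 r5 X Y
      - al * (((X - x1)*(y2 - y1) - (Y - y1)*(x2 - x1)) * ((X - x3)*(y4 - y3) - (Y - y3)*(x4 - x3)))
      - be * (((X - x1)*(y3 - y1) - (Y - y1)*(x3 - x1)) * ((X - x2)*(y4 - y2) - (Y - y2)*(x4 - x2))) := by
    intro X Y
    simp only [Qf, w10, w11, w12, w13, w14, w15, w20, w21, w22, w23, w24, w25]
    ring
  have hR1 : Qf (r0 - al * w10 x1 y1 x2 y2 x3 y3 x4 y4 + -(be * w20 x1 y1 x2 y2 x3 y3 x4 y4)) (r1 - al * w11 x1 y1 x2 y2 x3 y3 x4 y4 + -(be * w21 x1 y1 x2 y2 x3 y3 x4 y4)) (r2 - al * w12 x1 y1 x2 y2 x3 y3 x4 y4 + -(be * w22 x1 y1 x2 y2 x3 y3 x4 y4)) (r3 - al * w13 x1 y1 x2 y2 x3 y3 x4 y4 + -(be * w23 x1 y1 x2 y2 x3 y3 x4 y4)) (r4 - al * w14 x1 y1 x2 y2 x3 y3 x4 y4 + -(be * w24 x1 y1 x2 y2 x3 y3 x4 y4)) (r5 - al * w15 x1 y1 x2 y2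 x3 y3 x4 y4 + -(be * w25 x1 y1 x2 y2 x3 y3 x4 y4)) x1 y1 = 0 := by rw [hRfun]; linear_combination h1
  have hR2 : Qf (r0 - al * w10 x1 y1 x2 y2 x3 y3 x4 y4 + -(be * w20 x1 y1 x2 y2 x3 y3 x4 y4)) (r1 - al * w11 x1 y1 x2 y2 x3 y3 x4 y4 + -(be * w21 x1 y1 x2 y2 x3 y3 x4 y4)) (r2 - al * w12 x1 y1 x2 y2 x3 y3 x4 y4 + -(be * w22 x1 y1 x2 y2 x3 y3 x4 y4)) (r3 - al * w13 x1 y1 x2 y2 x3 y3 x4 y4 + -(be * w23 x1 y1 x2 y2 x3 y3 x4 y4)) (r4 - al * w14 x1 y1 x2 y2 x3 y3 x4 y4 + -(be * w24 x1 y1 x2 y2 x3 y3 x4 y4)) (r5 - al * w15 x1 y1 x2 y2 x3 y3 x4 y4 + -(be * w25 x1 y1 x2 y2 x3 y3 x4 y4)) x2 y2 = 0 := by rw [hRfun]; linear_combination h2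
  have hR3 : Qf (r0 - al * w10 x1 y1 x2 y2 x3 y3 x4 y4 + -(be * w20 x1 y1 x2 y2 x3 y3 x4 y4)) (r1 - al * w11 x1 y1 x2 y2 x3 y3 x4 y4 + -(be * w21 x1 y1 x2 y2 x3 y3 x4 y4)) (r2 - al * w12 x1 y1 x2 y2 x3 y3 x4 y4 + -(be * w22 x1 y1 x2 y2 x3 y3 x4 y4)) (r3 - al * w13 x1 y1 x2 y2 x3 y3 x4 y4 + -(be * w23 x1 y1 x2 y2 x3 y3 x4 y4)) (r4 - al * w14 x1 y1 x2 y2 x3 y3 x4 y4 + -(be * w24 x1 y1 x2 y2 x3 y3 x4 y4)) (r5 - al * w15 x1 y1 x2 y2 x3 y3 x4 y4 + -(be * w25 x1 y1 x2 y2 x3 y3 x4 y4)) x3 y3 = 0 := by rw [hRfun]; linear_combination h3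
  have hR4 : Qf (r0 - al * w10 x1 y1 x2 y2 x3 y3 x4 y4 + -(be * w20 x1 y1 x2 y2 x3 y3 x4 y4)) (r1 - al * w11 x1 y1 x2 y2 x3 y3 x4 y4 + -(be * w21 x1 y1 x2 y2 x3 y3 x4 y4)) (r2 - al * w12 x1 y1 x2 y2 x3 y3 x4 y4 + -(be * w22 x1 y1 x2 y2 x3 y3 x4 y4)) (r3 - al * w13 x1 y1 x2 y2 x3 y3 x4 y4 + -(be * w23 x1 y1 x2 y2 x3 y3 x4 y4)) (r4 - al * w14 x1 y1 x2 y2 x3 y3 x4 y4 + -(be * w24 x1 y1 x2 y2 x3 y3 x4 y4)) (r5 - al * w15 x1 y1 x2 y2 x3 y3 x4 y4 + -(be * w25 x1 y1 x2 y2 x3 y3 x4 y4)) x4 y4 = 0 := by rw [hRfun]; linear_combination h4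
  have hRq1 : Qf (r0 - al * w10 x1 y1 x2 y2 x3 y3 x4 y4 + -(be * w20 x1 y1 x2 y2 x3 y3 x4 y4)) (r1 - al * w11 x1 y1 x2 y2 x3 y3 x4 y4 + -(be * w21 x1 y1 x2 y2 x3 y3 x4 y4)) (r2 - al * w12 x1 y1 x2 y2 x3 y3 x4 y4 + -(be * w22 x1 y1 x2 y2 x3 y3 x4 y4)) (r3 - al * w13 x1 y1 x2 y2 x3 y3 x4 y4 + -(be * w23 x1 y1 x2 y2 x3 y3 x4 y4)) (r4 - al * w14 x1 y1 x2 y2 x3 y3 x4 y4 + -(be * w24 x1 y1 x2 y2 x3 y3 x4 y4)) (r5 - al * w15 x1 y1 x2 y2 x3 y3 x4 y4 + -(be * w25 x1 y1 x2 y2 x3 y3 x4 y4)) (x1 + t1*(x3 - x1)) (y1 + t1*(y3 - y1)) = 0 := by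
    rw [hRfun]; linear_combination (-1 : ℂ) * halm
  have hRq2 : Qf (r0 - al * w10 x1 y1 x2 y2 x3 y3 x4 y4 + -(be * w20 x1 y1 x2 y2 x3 y3 x4 y4)) (r1 - al * w11 x1 y1 x2 y2 x3 y3 x4 y4 + -(be * w21 x1 y1 x2 y2 x3 y3 x4 y4)) (r2 - al * w12 x1 y1 x2 y2 x3 y3 x4 y4 + -(be * w22 x1 y1 x2 y2 x3 y3 x4 y4)) (r3 - al * w13 x1 y1 x2 y2 x3 y3 x4 y4 + -(be * w23 x1 y1 x2 y2 x3 y3 x4 y4)) (r4 - al * w14 x1 y1 x2 y2 x3 y3 x4 y4 + -(be * w24 x1 y1 x2 y2 x3 y3 x4 y4)) (r5 - al * w15 x1 y1 x2 y2 x3 y3 x4 y4 + -(be * w25 x1 y1 x2 y2 x3 y3 x4 y4)) (x1 + t2*(x2 - x1)) (y1 + t2*(y2 - y1)) = 0 := by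
    rw [hRfun]; linear_combination (-1 : ℂ) * hbem
  -- pass to coordinates adapted to the lines p1p2 and p1p3
  obtain ⟨c0, c1, c2, c3, c4, c5, hc⟩ :
      ∃ c0 c1 c2 c3 c4 c5 : ℂ, ∀ s t : ℂ,
        Qf (r0 - al * w10 x1 y1 x2 y2 x3 y3 x4 y4 + -(be * w20 x1 y1 x2 y2 x3 y3 x4 y4)) (r1 - al * w11 x1 y1 x2 y2 x3 y3 x4 y4 + -(be * w21 x1 y1 x2 y2 x3 y3 x4 y4)) (r2 - al * w12 x1 y1 x2 y2 x3 y3 x4 y4 + -(be * w22 x1 y1 x2 y2 x3 y3 x4 y4)) (r3 - al * w13 x1 y1 x2 y2 x3 y3 x4 y4 + -(be * w23 x1 y1 x2 y2 x3 y3 x4 y4)) (r4 - al * w14 x1 y1 x2 y2 x3 y3 x4 y4 + -(be * w24 x1 y1 x2 y2 x3 y3 x4 y4)) (r5 - al * w15 x1 y1 x2 y2 x3 y3 x4 y4 + -(be * w25 x1 y1 x2 y2 x3 y3 x4 y4)) (x1 + s*(x2 - x1) + t*(x3 - x1)) (y1 + s*(y2 - y1) + t*(y3 - y1))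
          = Qf c0 c1 c2 c3 c4 c5 s t :=
    ⟨_, _, _, _, _, _, fun s t => substPlane _ _ _ _ _ _ _ _ _ _ _ _ s t⟩
  have eform : ∀ s t : ℂ, Qf c0 c1 c2 c3 c4 c5 s t
      = c0 + c1*s + c2*t + c3*s^2 + c4*(s*t) + c5*t^2 := fun s t => rfl
  have hrow0 : Qf c0 c1 c2 c3 c4 c5 0 0 = 0 := by
    have h := hc 0 0
    rw [show x1 + (0:ℂ)*(x2 - x1) + (0:ℂ)*(x3 - x1) = x1 from by ring,
        show y1 + (0:ℂ)*(y2 - y1) + (0:ℂ)*(y3 - y1) = y1 from by ring] at h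
    rw [← h]; exact hR1
  have hrow1 : Qf c0 c1 c2 c3 c4 c5 1 0 = 0 := by
    have h := hc 1 0
    rw [show x1 + (1:ℂ)*(x2 - x1) + (0:ℂ)*(x3 - x1) = x2 from by ring,
        show y1 + (1:ℂ)*(y2 - y1) + (0:ℂ)*(y3 - y1) = y2 from by ring] at h
    rw [← h]; exact hR2
  have hrowt : Qf c0 c1 c2 c3 c4 c5 t2 0 = 0 := by
    have h := hc t2 0
    rw [show x1 + t2*(x2 - x1) + (0:ℂ)*(x3 - x1) = x1 + t2*(x2 - x1) from by ring,
        show y1 + t2*(y2 - y1) + (0:ℂ)*(y3 - y1) = y1 + t2*(y2 - y1) from by ring] at h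
    rw [← h]; exact hRq2
  have hcol1 : Qf c0 c1 c2 c3 c4 c5 0 1 = 0 := by
    have h := hc 0 1
    rw [show x1 + (0:ℂ)*(x2 - x1) + (1:ℂ)*(x3 - x1) = x3 from by ring,
        show y1 + (0:ℂ)*(y2 - y1) + (1:ℂ)*(y3 - y1) = y3 from by ring] at h
    rw [← h]; exact hR3
  have hcolt : Qf c0 c1 c2 c3 c4 c5 0 t1 = 0 := by
    have h := hc 0 t1
    rw [show x1 + (0:ℂ)*(x2 - x1) + t1*(x3 - x1) = x1 + t1*(x3 - x1) from by ring,
        show y1 + (0:ℂ)*(y2 - y1) + t1*(y3 - y1) = y1 + t1*(y3 - y1) from by ring] at h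
    rw [← h]; exact hRq1
  have rowform : ∀ s : ℂ, c0 + c1*s + c3*s^2 = Qf c0 c1 c2 c3 c4 c5 s 0 := by
    intro s; simp only [Qf]; ring
  have colform : ∀ t : ℂ, c0 + c2*t + c5*t^2 = Qf c0 c1 c2 c3 c4 c5 0 t := by
    intro t; simp only [Qf]; ring
  obtain ⟨e0, e1', e3'⟩ := quad1 (zero_ne_one) (Ne.symm ht20) (Ne.symm ht21)
    ((by simpa using (rowform 0).trans hrow0 : c0 + c1*0 + c3*0^2 = 0))
    ((rowform 1).trans hrow1) ((rowform t2).trans hrowt)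
  obtain ⟨_, e2', e5'⟩ := quad1 (zero_ne_one) (Ne.symm ht10) (Ne.symm ht11)
    ((by simpa using (colform 0).trans hrow0 : c0 + c2*0 + c5*0^2 = 0))
    ((colform 1).trans hcol1) ((colform t1).trans hcolt)
  have hrow : ∀ s : ℂ, Qf c0 c1 c2 c3 c4 c5 s 0 = 0 := by
    intro s; rw [← rowform s, e0, e1', e3']; ring
  have hcol : ∀ t : ℂ, Qf c0 c1 c2 c3 c4 c5 0 t = 0 := by
    intro t; rw [← colform t, e0, e2', e5']; ring
  -- the fourth point in the adapted coordinates
  have hs4 : ((x4 - x1)*(y3 - y1) - (y4 - y1)*(x3 - x1))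
      / ((x2 - x1)*(y3 - y1) - (y2 - y1)*(x3 - x1)) ≠ 0 := div_ne_zero hd143 hd123
  have ht4 : ((x2 - x1)*(y4 - y1) - (y2 - y1)*(x4 - x1))
      / ((x2 - x1)*(y3 - y1) - (y2 - y1)*(x3 - x1)) ≠ 0 := by
    apply div_ne_zero _ hd123
    intro h; apply hd124; linear_combination h
  have hpt : Qf c0 c1 c2 c3 c4 c5
      (((x4 - x1)*(y3 - y1) - (y4 - y1)*(x3 - x1)) / ((x2 - x1)*(y3 - y1) - (y2 - y1)*(x3 - x1)))
      (((x2 - x1)*(y4 - y1) - (y2 - y1)*(x4 - x1)) / ((x2 - x1)*(y3 - y1) - (y2 - y1)*(x3 - x1)))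
      = 0 := by
    have h := hc (((x4 - x1)*(y3 - y1) - (y4 - y1)*(x3 - x1)) / ((x2 - x1)*(y3 - y1) - (y2 - y1)*(x3 - x1)))
      (((x2 - x1)*(y4 - y1) - (y2 - y1)*(x4 - x1)) / ((x2 - x1)*(y3 - y1) - (y2 - y1)*(x3 - x1)))
    rw [show x1 + (((x4 - x1)*(y3 - y1) - (y4 - y1)*(x3 - x1)) / ((x2 - x1)*(y3 - y1) - (y2 - y1)*(x3 - x1)))*(x2 - x1)
          + (((x2 - x1)*(y4 - y1) - (y2 - y1)*(x4 - x1)) / ((x2 - x1)*(y3 - y1) - (y2 - y1)*(x3 - x1)))*(x3 - x1) = x4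
          from by rw [div_mul_eq_mul_div, div_mul_eq_mul_div, add_assoc, ← add_div, add_div' _ _ _ hd123, div_eq_iff hd123]; ring,
        show y1 + (((x4 - x1)*(y3 - y1) - (y4 - y1)*(x3 - x1)) / ((x2 - x1)*(y3 - y1) - (y2 - y1)*(x3 - x1)))*(y2 - y1)
          + (((x2 - x1)*(y4 - y1) - (y2 - y1)*(x4 - x1)) / ((x2 - x1)*(y3 - y1) - (y2 - y1)*(x3 - x1)))*(y3 - y1) = y4
          from by rw [div_mul_eq_mul_div, div_mul_eq_mul_div, add_assoc, ← add_div, add_div' _ _ _ hd123, div_eq_iff hd123]; ring] at h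
    rw [← h]; exact hR4
  have hzero := quad2 hs4 ht4 hrow hcol hpt
  -- hence R vanishes identically
  have hRzero : ∀ X Y : ℂ, Qf (r0 - al * w10 x1 y1 x2 y2 x3 y3 x4 y4 + -(be * w20 x1 y1 x2 y2 x3 y3 x4 y4)) (r1 - al * w11 x1 y1 x2 y2 x3 y3 x4 y4 + -(be * w21 x1 y1 x2 y2 x3 y3 x4 y4)) (r2 - al * w12 x1 y1 x2 y2 x3 y3 x4 y4 + -(be * w22 x1 y1 x2 y2 x3 y3 x4 y4)) (r3 - al * w13 x1 y1 x2 y2 x3 y3 x4 y4 + -(be * w23 x1 y1 x2 y2 x3 y3 x4 y4)) (r4 - al * w14 x1 y1 x2 y2 x3 y3 x4 y4 + -(be * w24 x1 y1 x2 y2 x3 y3 x4 y4)) (r5 - al * w15 x1 y1 x2 y2 x3 y3 x4 y4 + -(be * w25 x1 y1 x2 y2 x3 y3 x4 y4)) X Y = 0 := by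
    intro X Y
    have hX : x1 + (((X - x1)*(y3 - y1) - (Y - y1)*(x3 - x1))
          / ((x2 - x1)*(y3 - y1) - (y2 - y1)*(x3 - x1)))*(x2 - x1)
        + (((x2 - x1)*(Y - y1) - (y2 - y1)*(X - x1))
          / ((x2 - x1)*(y3 - y1) - (y2 - y1)*(x3 - x1)))*(x3 - x1) = X := by
      rw [div_mul_eq_mul_div, div_mul_eq_mul_div, add_assoc, ← add_div, add_div' _ _ _ hd123, div_eq_iff hd123]; ring
    have hY : y1 + (((X - x1)*(y3 - y1) - (Y - y1)*(x3 - x1))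
          / ((x2 - x1)*(y3 - y1) - (y2 - y1)*(x3 - x1)))*(y2 - y1)
        + (((x2 - x1)*(Y - y1) - (y2 - y1)*(X - x1))
          / ((x2 - x1)*(y3 - y1) - (y2 - y1)*(x3 - x1)))*(y3 - y1) = Y := by
      rw [div_mul_eq_mul_div, div_mul_eq_mul_div, add_assoc, ← add_div, add_div' _ _ _ hd123, div_eq_iff hd123]; ring
    have h2 := (hc (((X - x1)*(y3 - y1) - (Y - y1)*(x3 - x1))
          / ((x2 - x1)*(y3 - y1) - (y2 - y1)*(x3 - x1)))
        (((x2 - x1)*(Y - y1) - (y2 - y1)*(X - x1))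
          / ((x2 - x1)*(y3 - y1) - (y2 - y1)*(x3 - x1)))).trans (hzero _ _)
    rw [hX, hY] at h2
    exact h2
  obtain ⟨f0, f1, f2, f3, f4, f5⟩ := coeffs_eq_zero hRzero
  exact ⟨al, be, by linear_combination f0, by linear_combination f1, by linear_combination f2,
    by linear_combination f3, by linear_combination f4, by linear_combination f5⟩


/-- For a quadratic vector field `H = P ∂/∂x + Q ∂/∂y` on `ℂ²` with exactly four
nondegenerate singular points, `∑ tr DH(pᵢ)/det DH(pᵢ) = 0` and `∑ 1/det DH(pᵢ) = 0`. -/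
theorem stmt_6 (P Q : MvPolynomial (Fin 2) ℂ)
    (hP : P.totalDegree ≤ 2) (hQ : Q.totalDegree ≤ 2)
    (p : Fin 4 → (Fin 2 → ℂ)) (hinj : Function.Injective p)
    (hPz : ∀ i, eval (p i) P = 0) (hQz : ∀ i, eval (p i) Q = 0)
    (hall : ∀ v : Fin 2 → ℂ, eval v P = 0 → eval v Q = 0 → ∃ i, v = p i)
    (hnd : ∀ i, jacDet P Q (p i) ≠ 0) :
    (∑ i, jacTr P Q (p i) / jacDet P Q (p i) = 0) ∧
    (∑ i, 1 / jacDet P Q (p i) = 0) := by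
  obtain ⟨a0, a1, a2, a3, a4, a5, hPe, hPx, hPy⟩ := stageA P hP
  obtain ⟨b0, b1, b2, b3, b4, b5, hQe, hQx, hQy⟩ := stageA Q hQ
  have hPv : ∀ i, Qf a0 a1 a2 a3 a4 a5 (p i 0) (p i 1) = 0 :=
    fun i => (hPe (p i)).symm.trans (hPz i)
  have hQv : ∀ i, Qf b0 b1 b2 b3 b4 b5 (p i 0) (p i 1) = 0 :=
    fun i => (hQe (p i)).symm.trans (hQz i)
  -- if both P and Q vanish on a whole line, we get infinitely many singular points
  have key_line : ∀ cx cy ux uy : ℂ, ¬(ux = 0 ∧ uy = 0) →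
      (∀ t : ℂ, Qf a0 a1 a2 a3 a4 a5 (cx + t*ux) (cy + t*uy) = 0) →
      (∀ t : ℂ, Qf b0 b1 b2 b3 b4 b5 (cx + t*ux) (cy + t*uy) = 0) → False := by
    intro cx cy ux uy hu hPl hQl
    have hex : ∀ t : ℂ, ∃ i, (![cx + t*ux, cy + t*uy] : Fin 2 → ℂ) = p i := by
      intro t
      apply hall
      · rw [hPe]; simpa using hPl t
      · rw [hQe]; simpa using hQl t
    choose f hf using hex
    have hfinj : Function.Injective f := by
      intro s t hst
      have h := (hf s).trans (hst ▸ (hf t).symm)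
      have h0 := congrFun h 0
      have h1 := congrFun h 1
      simp only [Matrix.cons_val_zero, Matrix.cons_val_one, Matrix.head_cons] at h0 h1
      rcases not_and_or.mp hu with hx | hx
      · exact mul_right_cancel₀ hx (by linear_combination h0)
      · exact mul_right_cancel₀ hx (by linear_combination h1)
    haveI := Finite.of_injective f hfinj
    exact not_finite ℂ
  -- no three of the four points are collinear
  have hptfun : ∀ l m : Fin 4, p l 0 = p m 0 → p l 1 = p m 1 → p l = p m := by
    intro l m hx hy; funext w; fin_cases w; exacts [hx, hy]
  have noncol : ∀ i j k : Fin 4, i ≠ j → i ≠ k → j ≠ k →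
      (p j 0 - p i 0)*(p k 1 - p i 1) - (p j 1 - p i 1)*(p k 0 - p i 0) ≠ 0 := by
    intro i j k hij hik hjk h0
    have hpij : p i ≠ p j := fun h => hij (hinj h)
    have hu : ¬((p j 0 - p i 0) = 0 ∧ (p j 1 - p i 1) = 0) := by
      rintro ⟨hx', hy'⟩
      exact hpij (hptfun i j (by linear_combination -hx') (by linear_combination -hy'))
    obtain ⟨τ, hτx, hτy⟩ : ∃ τ : ℂ, p k 0 = p i 0 + τ*(p j 0 - p i 0)
        ∧ p k 1 = p i 1 + τ*(p j 1 - p i 1) := by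
      rcases not_and_or.mp hu with hx | hx
      · refine ⟨(p k 0 - p i 0)/(p j 0 - p i 0), by field_simp; ring, ?_⟩
        field_simp
        linear_combination h0
      · refine ⟨(p k 1 - p i 1)/(p j 1 - p i 1), ?_, by field_simp; ring⟩
        field_simp
        linear_combination -h0
    have hτ0 : τ ≠ 0 := by
      intro h
      rw [h] at hτx hτy
      exact hik (hinj (hptfun i k (by linear_combination -hτx) (by linear_combination -hτy)))
    have hτ1 : τ ≠ 1 := by
      intro h
      rw [h] at hτx hτy
      exact hjk (hinj (hptfun j k (by linear_combination -hτx) (by linear_combination -hτy)))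
    apply key_line (p i 0) (p i 1) (p j 0 - p i 0) (p j 1 - p i 1) hu
    · obtain ⟨A, B, C, hABC⟩ : ∃ A B C : ℂ, ∀ s : ℂ,
          Qf a0 a1 a2 a3 a4 a5 (p i 0 + s*(p j 0 - p i 0)) (p i 1 + s*(p j 1 - p i 1))
            = A + B*s + C*s^2 :=
        ⟨_, _, _, fun s => substLine _ _ _ _ _ _ _ _ _ _ s⟩
      have e1 : A + B*(0:ℂ) + C*(0:ℂ)^2 = 0 := by
        have h := hABC 0
        rw [show p i 0 + (0:ℂ)*(p j 0 - p i 0) = p i 0 from by ring,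
            show p i 1 + (0:ℂ)*(p j 1 - p i 1) = p i 1 from by ring] at h
        linear_combination hPv i - h
      have e2 : A + B*(1:ℂ) + C*(1:ℂ)^2 = 0 := by
        have h := hABC 1
        rw [show p i 0 + (1:ℂ)*(p j 0 - p i 0) = p j 0 from by ring,
            show p i 1 + (1:ℂ)*(p j 1 - p i 1) = p j 1 from by ring] at h
        linear_combination hPv j - h
      have e3 : A + B*τ + C*τ^2 = 0 := by
        have h := hABC τ
        rw [← hτx, ← hτy] at h
        linear_combination hPv k - h
      obtain ⟨hA, hB, hC⟩ := quad1 zero_ne_one (Ne.symm hτ0) (Ne.symm hτ1) e1 e2 e3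
      intro t
      rw [hABC t, hA, hB, hC]; ring
    · obtain ⟨A, B, C, hABC⟩ : ∃ A B C : ℂ, ∀ s : ℂ,
          Qf b0 b1 b2 b3 b4 b5 (p i 0 + s*(p j 0 - p i 0)) (p i 1 + s*(p j 1 - p i 1))
            = A + B*s + C*s^2 :=
        ⟨_, _, _, fun s => substLine _ _ _ _ _ _ _ _ _ _ s⟩
      have e1 : A + B*(0:ℂ) + C*(0:ℂ)^2 = 0 := by
        have h := hABC 0
        rw [show p i 0 + (0:ℂ)*(p j 0 - p i 0) = p i 0 from by ring,
            show p i 1 + (0:ℂ)*(p j 1 - p i 1) = p i 1 from by ring] at h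
        linear_combination hQv i - h
      have e2 : A + B*(1:ℂ) + C*(1:ℂ)^2 = 0 := by
        have h := hABC 1
        rw [show p i 0 + (1:ℂ)*(p j 0 - p i 0) = p j 0 from by ring,
            show p i 1 + (1:ℂ)*(p j 1 - p i 1) = p j 1 from by ring] at h
        linear_combination hQv j - h
      have e3 : A + B*τ + C*τ^2 = 0 := by
        have h := hABC τ
        rw [← hτx, ← hτy] at h
        linear_combination hQv k - h
      obtain ⟨hA, hB, hC⟩ := quad1 zero_ne_one (Ne.symm hτ0) (Ne.symm hτ1) e1 e2 e3
      intro t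
      rw [hABC t, hA, hB, hC]; ring
  -- decompose P and Q in the pencil of conics through the four points
  obtain ⟨al, bl, hP0, hP1, hP2, hP3, hP4, hP5⟩ := span (p 0 0) (p 0 1) (p 1 0) (p 1 1) (p 2 0) (p 2 1) (p 3 0) (p 3 1) a0 a1 a2 a3 a4 a5
    (noncol 0 1 2 (by decide) (by decide) (by decide))
    (noncol 0 1 3 (by decide) (by decide) (by decide))
    (noncol 0 3 2 (by decide) (by decide) (by decide))
    (noncol 1 0 3 (by decide) (by decide) (by decide))
    (noncol 2 0 3 (by decide) (by decide) (by decide))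
    (hPv 0) (hPv 1) (hPv 2) (hPv 3)
  obtain ⟨ga, de, hQ0, hQ1, hQ2, hQ3, hQ4, hQ5⟩ := span (p 0 0) (p 0 1) (p 1 0) (p 1 1) (p 2 0) (p 2 1) (p 3 0) (p 3 1) b0 b1 b2 b3 b4 b5
    (noncol 0 1 2 (by decide) (by decide) (by decide))
    (noncol 0 1 3 (by decide) (by decide) (by decide))
    (noncol 0 3 2 (by decide) (by decide) (by decide))
    (noncol 1 0 3 (by decide) (by decide) (by decide))
    (noncol 2 0 3 (by decide) (by decide) (by decide))
    (hQv 0) (hQv 1) (hQv 2) (hQv 3)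
  have hJform : ∀ i, jacDet P Q (p i)
      = QfX a0 a1 a2 a3 a4 a5 (p i 0) (p i 1) * QfY b0 b1 b2 b3 b4 b5 (p i 0) (p i 1)
      - QfY a0 a1 a2 a3 a4 a5 (p i 0) (p i 1) * QfX b0 b1 b2 b3 b4 b5 (p i 0) (p i 1) := by
    intro i
    unfold jacDet
    rw [hPx (p i), hQy (p i), hPy (p i), hQx (p i)]
  have hTform : ∀ i, jacTr P Q (p i)
      = QfX a0 a1 a2 a3 a4 a5 (p i 0) (p i 1) + QfY b0 b1 b2 b3 b4 b5 (p i 0) (p i 1) := by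
    intro i
    unfold jacTr
    rw [hPx (p i), hQy (p i)]
  have hJ0 : jacDet P Q (p 0) = (al*de - bl*ga) * (((p 2 0 - p 0 0)*(p 3 1 - p 0 1) - (p 2 1 - p 0 1)*(p 3 0 - p 0 0))*((p 1 0 - p 0 0)*(p 3 1 - p 0 1) - (p 1 1 - p 0 1)*(p 3 0 - p 0 0))*((p 1 0 - p 0 0)*(p 2 1 - p 0 1) - (p 1 1 - p 0 1)*(p 2 0 - p 0 0))) := by
    rw [hJform 0]; simp only [QfX, QfY, hP0, hP1, hP2, hP3, hP4, hP5, hQ0, hQ1, hQ2, hQ3, hQ4, hQ5, w10, w11, w12, w13, w14, w15, w20, w21, w22, w23, w24, w25]; ring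
  have hJ1 : jacDet P Q (p 1) = -((al*de - bl*ga) * (((p 2 0 - p 1 0)*(p 3 1 - p 1 1) - (p 2 1 - p 1 1)*(p 3 0 - p 1 0))*((p 1 0 - p 0 0)*(p 3 1 - p 0 1) - (p 1 1 - p 0 1)*(p 3 0 - p 0 0))*((p 1 0 - p 0 0)*(p 2 1 - p 0 1) - (p 1 1 - p 0 1)*(p 2 0 - p 0 0)))) := by
    rw [hJform 1]; simp only [QfX, QfY, hP0, hP1, hP2, hP3, hP4, hP5, hQ0, hQ1, hQ2, hQ3, hQ4, hQ5, w10, w11, w12, w13, w14, w15, w20, w21, w22, w23, w24, w25]; ring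
  have hJ2 : jacDet P Q (p 2) = (al*de - bl*ga) * (((p 2 0 - p 1 0)*(p 3 1 - p 1 1) - (p 2 1 - p 1 1)*(p 3 0 - p 1 0))*((p 2 0 - p 0 0)*(p 3 1 - p 0 1) - (p 2 1 - p 0 1)*(p 3 0 - p 0 0))*((p 1 0 - p 0 0)*(p 2 1 - p 0 1) - (p 1 1 - p 0 1)*(p 2 0 - p 0 0))) := by
    rw [hJform 2]; simp only [QfX, QfY, hP0, hP1, hP2, hP3, hP4, hP5, hQ0, hQ1, hQ2, hQ3, hQ4, hQ5, w10, w11, w12, w13, w14, w15, w20, w21, w22, w23, w24, w25]; ring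
  have hJ3 : jacDet P Q (p 3) = -((al*de - bl*ga) * (((p 2 0 - p 1 0)*(p 3 1 - p 1 1) - (p 2 1 - p 1 1)*(p 3 0 - p 1 0))*((p 2 0 - p 0 0)*(p 3 1 - p 0 1) - (p 2 1 - p 0 1)*(p 3 0 - p 0 0))*((p 1 0 - p 0 0)*(p 3 1 - p 0 1) - (p 1 1 - p 0 1)*(p 3 0 - p 0 0)))) := by
    rw [hJform 3]; simp only [QfX, QfY, hP0, hP1, hP2, hP3, hP4, hP5, hQ0, hQ1, hQ2, hQ3, hQ4, hQ5, w10, w11, w12, w13, w14, w15, w20, w21, w22, w23, w24, w25]; ring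
  have hD0 : ((p 2 0 - p 1 0)*(p 3 1 - p 1 1) - (p 2 1 - p 1 1)*(p 3 0 - p 1 0)) ≠ 0 := noncol 1 2 3 (by decide) (by decide) (by decide)
  have hD1 : ((p 2 0 - p 0 0)*(p 3 1 - p 0 1) - (p 2 1 - p 0 1)*(p 3 0 - p 0 0)) ≠ 0 := noncol 0 2 3 (by decide) (by decide) (by decide)
  have hD2 : ((p 1 0 - p 0 0)*(p 3 1 - p 0 1) - (p 1 1 - p 0 1)*(p 3 0 - p 0 0)) ≠ 0 := noncol 0 1 3 (by decide) (by decide) (by decide)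
  have hD3 : ((p 1 0 - p 0 0)*(p 2 1 - p 0 1) - (p 1 1 - p 0 1)*(p 2 0 - p 0 0)) ≠ 0 := noncol 0 1 2 (by decide) (by decide) (by decide)
  have hDd : (al*de - bl*ga) ≠ 0 := by
    have h := hnd 0
    rw [hJ0] at h
    exact (mul_ne_zero_iff.mp h).1
  have hid1 : (QfX a0 a1 a2 a3 a4 a5 (p 0 0) (p 0 1) + QfY b0 b1 b2 b3 b4 b5 (p 0 0) (p 0 1)) * ((p 2 0 - p 1 0)*(p 3 1 - p 1 1) - (p 2 1 - p 1 1)*(p 3 0 - p 1 0))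
      - (QfX a0 a1 a2 a3 a4 a5 (p 1 0) (p 1 1) + QfY b0 b1 b2 b3 b4 b5 (p 1 0) (p 1 1)) * ((p 2 0 - p 0 0)*(p 3 1 - p 0 1) - (p 2 1 - p 0 1)*(p 3 0 - p 0 0))
      + (QfX a0 a1 a2 a3 a4 a5 (p 2 0) (p 2 1) + QfY b0 b1 b2 b3 b4 b5 (p 2 0) (p 2 1)) * ((p 1 0 - p 0 0)*(p 3 1 - p 0 1) - (p 1 1 - p 0 1)*(p 3 0 - p 0 0))
      - (QfX a0 a1 a2 a3 a4 a5 (p 3 0) (p 3 1) + QfY b0 b1 b2 b3 b4 b5 (p 3 0) (p 3 1)) * ((p 1 0 - p 0 0)*(p 2 1 - p 0 1) - (p 1 1 - p 0 1)*(p 2 0 - p 0 0)) = 0 := by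
    simp only [QfX, QfY, hP0, hP1, hP2, hP3, hP4, hP5, hQ0, hQ1, hQ2, hQ3, hQ4, hQ5, w10, w11, w12, w13, w14, w15, w20, w21, w22, w23, w24, w25]; ring
  have hid2 : (1:ℂ) * ((p 2 0 - p 1 0)*(p 3 1 - p 1 1) - (p 2 1 - p 1 1)*(p 3 0 - p 1 0)) - 1 * ((p 2 0 - p 0 0)*(p 3 1 - p 0 1) - (p 2 1 - p 0 1)*(p 3 0 - p 0 0)) + 1 * ((p 1 0 - p 0 0)*(p 3 1 - p 0 1) - (p 1 1 - p 0 1)*(p 3 0 - p 0 0)) - 1 * ((p 1 0 - p 0 0)*(p 2 1 - p 0 1) - (p 1 1 - p 0 1)*(p 2 0 - p 0 0)) = 0 := by ring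
  constructor
  · rw [Fin.sum_univ_four, hJ0, hJ1, hJ2, hJ3, hTform 0, hTform 1, hTform 2, hTform 3]
    exact key hDd hD0 hD1 hD2 hD3 hid1
  · rw [Fin.sum_univ_four, hJ0, hJ1, hJ2, hJ3]
    have := key hDd hD0 hD1 hD2 hD3 hid2
    simpa using this
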